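/- arXiv:2311.08384 — 2 statements merged into one kernel-verified Lean document; each statement's English description precedes it below -/
import Mathlib

section
/- Simulation lemma: For any policy π, any function f : S×A → ℝ, and any comparator policy π^e of a finite discounted MDP, V^{π^e} − V^π ≤ E_{s₀∼μ₀}[|f(s₀, π(s₀)) − V^π(s₀)|] + (1/(1−γ)) · E_{(s,a)∼d^{π^e}}[(T^π f)(s,a) − f(s,a)] + (1/(1−γ)) · E_{(s,a)∼d^{π^e}}[f(s,a) − f(s, π(s))]. -/
open Finset

structure FinMDP (S A : Type*) [Fintype S] [Fintype A] where
  P : S → A → S → ℝ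
  P_nonneg : ∀ s a s', 0 ≤ P s a s'
  P_sum : ∀ s a, ∑ s', P s a s' = 1
  r : S → A → ℝ
  r_nonneg : ∀ s a, 0 ≤ r s a
  r_le_one : ∀ s a, r s a ≤ 1
  disc : ℝ
  disc_pos : 0 < disc
  disc_lt_one : disc < 1
  init : S → ℝ
  init_nonneg : ∀ s, 0 ≤ init s
  init_sum : ∑ s, init s = 1

variable {S A : Type*} [Fintype S] [Fintype A] [Nonempty S] [Nonempty A]

/-- A policy assigns to each state a probability mass function over actions. -/
def IsPolicy (π : S → A → ℝ) : Prop :=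
  (∀ s a, 0 ≤ π s a) ∧ ∀ s, ∑ a, π s a = 1

/-- The Bellman operator `T^π`. -/
noncomputable def FinMDP.bellman (M : FinMDP S A) (π f : S → A → ℝ) (s : S) (a : A) : ℝ :=
  M.r s a + M.disc * ∑ s', M.P s a s' * ∑ a', π s' a' * f s' a'

/-- `Q` is the action-value function of `π`, i.e. satisfies the Bellman equation. -/
def FinMDP.IsQ (M : FinMDP S A) (π Q : S → A → ℝ) : Prop :=
  ∀ s a, Q s a = M.bellman π Q s a

/-- The state value `V^π(s)` induced by a `Q`-function. -/
noncomputable def vOf (π Q : S → A → ℝ) (s : S) : ℝ := ∑ a, π s a * Q s a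

/-- The scalar value `V^π = E_{s ∼ μ₀}[V^π(s)]`. -/
noncomputable def FinMDP.scalarV (M : FinMDP S A) (π Q : S → A → ℝ) : ℝ :=
  ∑ s, M.init s * vOf π Q s

/-- Distribution of the state at time `t` under policy `π`. -/
noncomputable def FinMDP.stateDist (M : FinMDP S A) (π : S → A → ℝ) : ℕ → S → ℝ
  | 0 => M.init
  | (t + 1) => fun s' => ∑ s, ∑ a, FinMDP.stateDist M π t s * π s a * M.P s a s'

/-- The discounted occupancy measure `d^π(s,a) = (1-γ) ∑_t γ^t Pr^π(s_t = s, a_t = a)`. -/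
noncomputable def FinMDP.occ (M : FinMDP S A) (π : S → A → ℝ) (s : S) (a : A) : ℝ :=
  (1 - M.disc) * ∑' t : ℕ, M.disc ^ t * M.stateDist π t s * π s a

lemma tele_hasSum {γ : ℝ} (hγ0 : 0 ≤ γ) (hγ1 : γ < 1) (u : ℕ → ℝ) (C : ℝ)
    (hC : ∀ t, |u t| ≤ C) :
    HasSum (fun t => γ ^ t * u t - γ ^ (t+1) * u (t+1)) (u 0) := by
  have hgeo : Summable (fun t : ℕ => C * γ ^ t) :=
    (summable_geometric_of_lt_one hγ0 hγ1).mul_left C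
  have hb : ∀ t : ℕ, |γ ^ t * u t| ≤ C * γ ^ t := by
    intro t
    rw [abs_mul, abs_pow, abs_of_nonneg hγ0, mul_comm]
    exact mul_le_mul_of_nonneg_right (hC t) (pow_nonneg hγ0 t)
  have h1 : Summable (fun t : ℕ => γ ^ t * u t) := by
    refine Summable.of_abs (Summable.of_nonneg_of_le (fun t => abs_nonneg _) hb hgeo)
  have h2 : Summable (fun t : ℕ => γ ^ (t+1) * u (t+1)) := by
    exact (summable_nat_add_iff 1).mpr h1
  have hs : Summable (fun t => γ ^ t * u t - γ ^ (t+1) * u (t+1)) := h1.sub h2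
  have hv0 : Filter.Tendsto (fun n => γ ^ n * u n) Filter.atTop (nhds 0) := by
    apply squeeze_zero_norm (fun n => (hb n))
    have := tendsto_pow_atTop_nhds_zero_of_lt_one hγ0 hγ1
    simpa using this.const_mul C
  have ht : Filter.Tendsto (fun n => ∑ i ∈ Finset.range n, (γ ^ i * u i - γ ^ (i+1) * u (i+1)))
      Filter.atTop (nhds (u 0)) := by
    have : ∀ n, ∑ i ∈ Finset.range n, (γ ^ i * u i - γ ^ (i+1) * u (i+1))
        = γ ^ 0 * u 0 - γ ^ n * u n := fun n => Finset.sum_range_sub' (fun i => γ ^ i * u i) n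
    simp_rw [this, pow_zero, one_mul]
    simpa using (tendsto_const_nhds.sub hv0)
  have := tendsto_nhds_unique hs.hasSum.tendsto_sum_nat ht
  exact this ▸ hs.hasSum

lemma sd_nonneg (M : FinMDP S A) (πe : S → A → ℝ) (hπe : IsPolicy πe) :
    ∀ t s, 0 ≤ M.stateDist πe t s := by
  intro t
  induction t with
  | zero => exact M.init_nonneg
  | succ t ih =>
    intro s'
    refine Finset.sum_nonneg fun s _ => Finset.sum_nonneg fun a _ => ?_
    exact mul_nonneg (mul_nonneg (ih s) (hπe.1 s a)) (M.P_nonneg s a s')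

lemma sd_sum (M : FinMDP S A) (πe : S → A → ℝ) (hπe : IsPolicy πe) :
    ∀ t, ∑ s, M.stateDist πe t s = 1 := by
  intro t
  induction t with
  | zero => exact M.init_sum
  | succ t ih =>
    show ∑ s', ∑ s, ∑ a, M.stateDist πe t s * πe s a * M.P s a s' = 1
    rw [Finset.sum_comm]
    calc ∑ s, ∑ s', ∑ a, M.stateDist πe t s * πe s a * M.P s a s'
        = ∑ s, ∑ a, ∑ s', M.stateDist πe t s * πe s a * M.P s a s' := by
          exact Finset.sum_congr rfl fun s _ => Finset.sum_comm
      _ = ∑ s, ∑ a, M.stateDist πe t s * πe s a := by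
          refine Finset.sum_congr rfl fun s _ => Finset.sum_congr rfl fun a _ => ?_
          rw [← Finset.mul_sum, M.P_sum, mul_one]
      _ = ∑ s, M.stateDist πe t s := by
          refine Finset.sum_congr rfl fun s _ => ?_
          rw [← Finset.mul_sum, hπe.2, mul_one]
      _ = 1 := ih

lemma sd_le_one (M : FinMDP S A) (πe : S → A → ℝ) (hπe : IsPolicy πe) (t : ℕ) (s : S) :
    M.stateDist πe t s ≤ 1 := by
  have := sd_sum M πe hπe t
  calc M.stateDist πe t s ≤ ∑ s', M.stateDist πe t s' :=
        Finset.single_le_sum (fun s' _ => sd_nonneg M πe hπe t s') (Finset.mem_univ s)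
    _ = 1 := this

lemma w_summable (M : FinMDP S A) (πe : S → A → ℝ) (hπe : IsPolicy πe) (s : S) (a : A) :
    Summable (fun t : ℕ => M.disc ^ t * M.stateDist πe t s * πe s a) := by
  have hγ0 := M.disc_pos.le
  have hπ1 : πe s a ≤ 1 := by
    have := hπe.2 s
    calc πe s a ≤ ∑ a', πe s a' :=
          Finset.single_le_sum (fun a' _ => hπe.1 s a') (Finset.mem_univ a)
      _ = 1 := this
  refine Summable.of_nonneg_of_le (fun t => ?_) (fun t => ?_)
    (summable_geometric_of_lt_one hγ0 M.disc_lt_one)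
  · exact mul_nonneg (mul_nonneg (pow_nonneg hγ0 t) (sd_nonneg M πe hπe t s)) (hπe.1 s a)
  · calc M.disc ^ t * M.stateDist πe t s * πe s a
        ≤ M.disc ^ t * 1 * 1 := by
          apply mul_le_mul (mul_le_mul le_rfl (sd_le_one M πe hπe t s)
            (sd_nonneg M πe hπe t s) (pow_nonneg hγ0 t)) hπ1 (hπe.1 s a)
          exact mul_nonneg (pow_nonneg hγ0 t) zero_le_one
      _ = M.disc ^ t := by ring

lemma triple_swap (F : S → A → S → ℝ) :
    ∑ s, ∑ a, ∑ s', F s a s' = ∑ s', ∑ s, ∑ a, F s a s' := by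
  calc ∑ s, ∑ a, ∑ s', F s a s' = ∑ s, ∑ s', ∑ a, F s a s' :=
        Finset.sum_congr rfl fun s _ => Finset.sum_comm
    _ = ∑ s', ∑ s, ∑ a, F s a s' := Finset.sum_comm

lemma occ_sum_eq (M : FinMDP S A) (πe : S → A → ℝ) (hπe : IsPolicy πe) (X : S → A → ℝ) :
    ∑ s, ∑ a, M.occ πe s a * X s a
      = (1 - M.disc) * ∑' t : ℕ, M.disc ^ t
          * ∑ s, ∑ a, M.stateDist πe t s * πe s a * X s a := by
  have h1 : ∀ s a, M.occ πe s a * X s a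
      = (1 - M.disc) * ∑' t : ℕ, M.disc ^ t * M.stateDist πe t s * πe s a * X s a := by
    intro s a
    rw [FinMDP.occ, mul_assoc, ← tsum_mul_right]
  have hS : ∀ s a, Summable (fun t : ℕ => M.disc ^ t * M.stateDist πe t s * πe s a * X s a) :=
    fun s a => (w_summable M πe hπe s a).mul_right (X s a)
  simp_rw [h1, ← Finset.mul_sum]
  congr 1
  calc ∑ s, ∑ a, ∑' t : ℕ, M.disc ^ t * M.stateDist πe t s * πe s a * X s a
      = ∑ s, ∑' t : ℕ, ∑ a, M.disc ^ t * M.stateDist πe t s * πe s a * X s a :=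
        Finset.sum_congr rfl fun s _ => (Summable.tsum_finsetSum fun a _ => hS s a).symm
    _ = ∑' t : ℕ, ∑ s, ∑ a, M.disc ^ t * M.stateDist πe t s * πe s a * X s a :=
        (Summable.tsum_finsetSum fun s _ => summable_sum fun a _ => hS s a).symm
    _ = ∑' t : ℕ, M.disc ^ t * ∑ s, ∑ a, M.stateDist πe t s * πe s a * X s a := by
        refine tsum_congr fun t => ?_
        simp_rw [Finset.mul_sum]
        exact Finset.sum_congr rfl fun s _ => Finset.sum_congr rfl fun a _ => by ring

lemma step_id (M : FinMDP S A) (πe : S → A → ℝ) (t : ℕ) (h : S → ℝ) :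
    ∑ s, ∑ a, M.stateDist πe t s * πe s a * (M.r s a + M.disc * ∑ s', M.P s a s' * h s')
      = (∑ s, ∑ a, M.stateDist πe t s * πe s a * M.r s a)
        + M.disc * ∑ s', M.stateDist πe (t+1) s' * h s' := by
  have expand : ∀ s a, M.stateDist πe t s * πe s a * (M.r s a + M.disc * ∑ s', M.P s a s' * h s')
      = M.stateDist πe t s * πe s a * M.r s a
        + ∑ s', M.disc * (M.stateDist πe t s * πe s a * M.P s a s' * h s') := by
    intro s a
    rw [mul_add]
    congr 1
    rw [Finset.mul_sum, Finset.mul_sum]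
    exact Finset.sum_congr rfl fun s' _ => by ring
  simp_rw [expand, Finset.sum_add_distrib]
  congr 1
  calc ∑ s, ∑ a, ∑ s', M.disc * (M.stateDist πe t s * πe s a * M.P s a s' * h s')
      = ∑ s', ∑ s, ∑ a, M.disc * (M.stateDist πe t s * πe s a * M.P s a s' * h s') :=
        triple_swap _
    _ = M.disc * ∑ s', M.stateDist πe (t+1) s' * h s' := by
        rw [Finset.mul_sum]
        refine Finset.sum_congr rfl fun s' _ => ?_
        show _ = M.disc * ((∑ s, ∑ a, M.stateDist πe t s * πe s a * M.P s a s') * h s')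
        simp_rw [Finset.sum_mul, Finset.mul_sum]

lemma E_summable (M : FinMDP S A) (πe : S → A → ℝ) (hπe : IsPolicy πe) (X : S → A → ℝ) :
    Summable (fun t : ℕ => M.disc ^ t * ∑ s, ∑ a, M.stateDist πe t s * πe s a * X s a) := by
  have hγ0 := M.disc_pos.le
  have hB : ∀ t, |M.disc ^ t * ∑ s, ∑ a, M.stateDist πe t s * πe s a * X s a|
      ≤ (∑ s, ∑ a, |X s a|) * M.disc ^ t := by
    intro t
    rw [abs_mul, abs_pow, abs_of_nonneg hγ0, mul_comm]
    refine mul_le_mul_of_nonneg_right ?_ (pow_nonneg hγ0 t)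
    calc |∑ s, ∑ a, M.stateDist πe t s * πe s a * X s a|
        ≤ ∑ s, |∑ a, M.stateDist πe t s * πe s a * X s a| := Finset.abs_sum_le_sum_abs _ _
      _ ≤ ∑ s, ∑ a, |M.stateDist πe t s * πe s a * X s a| :=
          Finset.sum_le_sum fun s _ => Finset.abs_sum_le_sum_abs _ _
      _ ≤ ∑ s, ∑ a, |X s a| := by
          refine Finset.sum_le_sum fun s _ => Finset.sum_le_sum fun a _ => ?_
          rw [abs_mul, abs_mul]
          have h1 : |M.stateDist πe t s| ≤ 1 := by
            rw [abs_of_nonneg (sd_nonneg M πe hπe t s)]; exact sd_le_one M πe hπe t s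
          have h2 : |πe s a| ≤ 1 := by
            rw [abs_of_nonneg (hπe.1 s a)]
            calc πe s a ≤ ∑ a', πe s a' :=
                  Finset.single_le_sum (fun a' _ => hπe.1 s a') (Finset.mem_univ a)
              _ = 1 := hπe.2 s
          calc |M.stateDist πe t s| * |πe s a| * |X s a| ≤ 1 * 1 * |X s a| := by
                apply mul_le_mul_of_nonneg_right _ (abs_nonneg _)
                exact mul_le_mul h1 h2 (abs_nonneg _) zero_le_one
            _ = |X s a| := by ring
  refine Summable.of_abs (Summable.of_nonneg_of_le (fun t => abs_nonneg _) hB ?_)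
  exact (summable_geometric_of_lt_one hγ0 M.disc_lt_one).mul_left _

lemma weighted_abs_le (M : FinMDP S A) (πe : S → A → ℝ) (hπe : IsPolicy πe) (t : ℕ) (x : S → ℝ) :
    |∑ s, M.stateDist πe t s * x s| ≤ ∑ s, |x s| := by
  calc |∑ s, M.stateDist πe t s * x s| ≤ ∑ s, |M.stateDist πe t s * x s| :=
        Finset.abs_sum_le_sum_abs _ _
    _ ≤ ∑ s, |x s| := by
      refine Finset.sum_le_sum fun s _ => ?_
      rw [abs_mul, abs_of_nonneg (sd_nonneg M πe hπe t s)]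
      calc M.stateDist πe t s * |x s| ≤ 1 * |x s| :=
            mul_le_mul_of_nonneg_right (sd_le_one M πe hπe t s) (abs_nonneg _)
        _ = |x s| := one_mul _

/-- Simulation lemma. -/
theorem stmt3 (M : FinMDP S A) (π πe f Q Qe : S → A → ℝ)
    (hπ : IsPolicy π) (hπe : IsPolicy πe) (hQ : M.IsQ π Q) (hQe : M.IsQ πe Qe) :
    M.scalarV πe Qe - M.scalarV π Q ≤
      (∑ s, M.init s * |(∑ a, π s a * f s a) - vOf π Q s|)
      + (1 / (1 - M.disc)) * ∑ s, ∑ a, M.occ πe s a * (M.bellman π f s a - f s a)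
      + (1 / (1 - M.disc)) * ∑ s, ∑ a, M.occ πe s a * (f s a - ∑ a', π s a' * f s a') := by
  have hγ0 := M.disc_pos
  have hγ1 := M.disc_lt_one
  have hne : (1 : ℝ) - M.disc ≠ 0 := by linarith
  -- per-time identities
  have I1 : ∀ t, ∑ s, ∑ a, M.stateDist πe t s * πe s a * (M.bellman π f s a - f s a)
      = (∑ s, ∑ a, M.stateDist πe t s * πe s a * M.r s a)
        + M.disc * (∑ s', M.stateDist πe (t+1) s' * ∑ a', π s' a' * f s' a')
        - ∑ s, ∑ a, M.stateDist πe t s * πe s a * f s a := by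
    intro t
    have split : ∑ s, ∑ a, M.stateDist πe t s * πe s a * (M.bellman π f s a - f s a)
        = (∑ s, ∑ a, M.stateDist πe t s * πe s a * M.bellman π f s a)
          - ∑ s, ∑ a, M.stateDist πe t s * πe s a * f s a := by
      simp_rw [mul_sub, Finset.sum_sub_distrib]
    rw [split]
    congr 1
    simp only [FinMDP.bellman]
    exact step_id M πe t (fun s' => ∑ a', π s' a' * f s' a')
  have I2 : ∀ t, ∑ s, ∑ a, M.stateDist πe t s * πe s a * (f s a - ∑ a', π s a' * f s a')
      = (∑ s, ∑ a, M.stateDist πe t s * πe s a * f s a)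
        - ∑ s, M.stateDist πe t s * ∑ a', π s a' * f s a' := by
    intro t
    simp_rw [mul_sub, Finset.sum_sub_distrib]
    congr 1
    refine Finset.sum_congr rfl fun s _ => ?_
    rw [← Finset.sum_mul]
    rw [show (∑ a, M.stateDist πe t s * πe s a) = M.stateDist πe t s * ∑ a, πe s a from
      (Finset.mul_sum _ _ _).symm, hπe.2 s, mul_one]
  have I3 : ∀ t, ∑ s, M.stateDist πe t s * vOf πe Qe s
      = (∑ s, ∑ a, M.stateDist πe t s * πe s a * M.r s a)
        + M.disc * ∑ s', M.stateDist πe (t+1) s' * vOf πe Qe s' := by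
    intro t
    have h1 : ∀ s, M.stateDist πe t s * vOf πe Qe s
        = ∑ a, M.stateDist πe t s * πe s a * Qe s a := by
      intro s
      rw [vOf, Finset.mul_sum]
      exact Finset.sum_congr rfl fun a _ => by ring
    simp_rw [h1]
    have h2 : ∀ s a, Qe s a = M.r s a + M.disc * ∑ s', M.P s a s' * vOf πe Qe s' := by
      intro s a
      rw [hQe s a]; rfl
    simp_rw [h2]
    exact step_id M πe t (vOf πe Qe)
  -- telescoping sums
  have hteleψ : HasSum (fun t => M.disc ^ t * (∑ s, M.stateDist πe t s * vOf πe Qe s)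
      - M.disc ^ (t+1) * (∑ s, M.stateDist πe (t+1) s * vOf πe Qe s))
      (∑ s, M.stateDist πe 0 s * vOf πe Qe s) :=
    tele_hasSum hγ0.le hγ1 _ (∑ s, |vOf πe Qe s|)
      (fun t => weighted_abs_le M πe hπe t _)
  have hteleφ : HasSum (fun t => M.disc ^ t * (∑ s, M.stateDist πe t s * ∑ a', π s a' * f s a')
      - M.disc ^ (t+1) * (∑ s, M.stateDist πe (t+1) s * ∑ a', π s a' * f s a'))
      (∑ s, M.stateDist πe 0 s * ∑ a', π s a' * f s a') :=
    tele_hasSum hγ0.le hγ1 _ (∑ s, |∑ a', π s a' * f s a'|)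
      (fun t => weighted_abs_le M πe hπe t _)
  -- summability of the two expectation series
  have hsum1 : Summable (fun t : ℕ => M.disc ^ t
      * ∑ s, ∑ a, M.stateDist πe t s * πe s a * (M.bellman π f s a - f s a)) :=
    E_summable M πe hπe _
  have hsum2 : Summable (fun t : ℕ => M.disc ^ t
      * ∑ s, ∑ a, M.stateDist πe t s * πe s a * (f s a - ∑ a', π s a' * f s a')) :=
    E_summable M πe hπe _
  -- the key tsum identity
  have key : (∑' t : ℕ, M.disc ^ t
        * ∑ s, ∑ a, M.stateDist πe t s * πe s a * (M.bellman π f s a - f s a))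
      + (∑' t : ℕ, M.disc ^ t
        * ∑ s, ∑ a, M.stateDist πe t s * πe s a * (f s a - ∑ a', π s a' * f s a'))
      = (∑ s, M.stateDist πe 0 s * vOf πe Qe s)
        - ∑ s, M.stateDist πe 0 s * ∑ a', π s a' * f s a' := by
    rw [← Summable.tsum_add hsum1 hsum2]
    rw [← (hteleψ.sub hteleφ).tsum_eq]
    refine tsum_congr fun t => ?_
    have h3 := I3 t
    rw [I1 t, I2 t, pow_succ]
    have hEr : (∑ s, ∑ a, M.stateDist πe t s * πe s a * M.r s a)
        = (∑ s, M.stateDist πe t s * vOf πe Qe s)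
          - M.disc * ∑ s', M.stateDist πe (t+1) s' * vOf πe Qe s' := by linarith
    rw [hEr]
    ring
  -- rewrite occupancy sums
  rw [occ_sum_eq M πe hπe (fun s a => M.bellman π f s a - f s a),
    occ_sum_eq M πe hπe (fun s a => f s a - ∑ a', π s a' * f s a')]
  have hcancel : ∀ x : ℝ, 1 / (1 - M.disc) * ((1 - M.disc) * x) = x := by
    intro x; field_simp
  rw [hcancel, hcancel]
  -- conclude
  have hψ0 : (∑ s, M.stateDist πe 0 s * vOf πe Qe s) = M.scalarV πe Qe := rfl
  have hfin : (∑ s, M.stateDist πe 0 s * ∑ a', π s a' * f s a') - M.scalarV π Q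
      ≤ ∑ s, M.init s * |(∑ a, π s a * f s a) - vOf π Q s| := by
    have : (∑ s, M.stateDist πe 0 s * ∑ a', π s a' * f s a') - M.scalarV π Q
        = ∑ s, M.init s * ((∑ a, π s a * f s a) - vOf π Q s) := by
      show (∑ s, M.init s * ∑ a', π s a' * f s a') - ∑ s, M.init s * vOf π Q s = _
      rw [← Finset.sum_sub_distrib]
      exact Finset.sum_congr rfl fun s _ => by ring
    rw [this]
    refine Finset.sum_le_sum fun s _ => ?_
    exact mul_le_mul_of_nonneg_left (le_abs_self _) (M.init_nonneg s)
  linarith [key, hψ0, hfin]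
end

section
/- Bellman backup contraction in L2 of the occupancy measure: For any policy π of a finite discounted MDP and any function f : S×A → ℝ, E_{(s,a)∼d^π}[((T^π f)(s,a) − Q^π(s,a))²] ≤ γ · E_{(s,a)∼d^π}[(f(s,a) − Q^π(s,a))²]. -/
open Finset

variable {S A : Type*} [Fintype S] [Fintype A] [Nonempty S] [Nonempty A]

/- ### Auxiliary lemmas -/

lemma stateDist_nonneg (M : FinMDP S A) (π : S → A → ℝ) (hπ : IsPolicy π) :
    ∀ t s, 0 ≤ M.stateDist π t s := by
  intro t
  induction t with
  | zero => exact M.init_nonneg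
  | succ t ih =>
    intro s'
    exact Finset.sum_nonneg fun s _ => Finset.sum_nonneg fun a _ =>
      mul_nonneg (mul_nonneg (ih s) (hπ.1 s a)) (M.P_nonneg s a s')

lemma stateDist_sum (M : FinMDP S A) (π : S → A → ℝ) (hπ : IsPolicy π) :
    ∀ t, ∑ s, M.stateDist π t s = 1 := by
  intro t
  induction t with
  | zero => exact M.init_sum
  | succ t ih =>
    show ∑ s', ∑ s, ∑ a, M.stateDist π t s * π s a * M.P s a s' = 1
    rw [Finset.sum_comm]
    calc ∑ s, ∑ s', ∑ a, M.stateDist π t s * π s a * M.P s a s'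
        = ∑ s, ∑ a, M.stateDist π t s * π s a * ∑ s', M.P s a s' := by
          rw [Finset.sum_congr rfl]; intro s _
          rw [Finset.sum_comm]
          exact Finset.sum_congr rfl fun a _ => (Finset.mul_sum _ _ _).symm
      _ = ∑ s, M.stateDist π t s := by
          refine Finset.sum_congr rfl fun s _ => ?_
          simp only [M.P_sum, mul_one]
          rw [← Finset.mul_sum, hπ.2 s, mul_one]
      _ = 1 := ih

lemma stateDist_le_one (M : FinMDP S A) (π : S → A → ℝ) (hπ : IsPolicy π) (t : ℕ) (s : S) :
    M.stateDist π t s ≤ 1 := by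
  have := stateDist_sum M π hπ t
  calc M.stateDist π t s ≤ ∑ s', M.stateDist π t s' :=
        Finset.single_le_sum (fun s' _ => stateDist_nonneg M π hπ t s') (Finset.mem_univ s)
    _ = 1 := this

lemma pi_le_one (π : S → A → ℝ) (hπ : IsPolicy π) (s : S) (a : A) : π s a ≤ 1 := by
  calc π s a ≤ ∑ a', π s a' := Finset.single_le_sum (fun a' _ => hπ.1 s a') (Finset.mem_univ a)
    _ = 1 := hπ.2 s

lemma occ_summable (M : FinMDP S A) (π : S → A → ℝ) (hπ : IsPolicy π) (s : S) (a : A) :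
    Summable fun t : ℕ => M.disc ^ t * M.stateDist π t s * π s a := by
  refine Summable.of_nonneg_of_le
    (fun t => mul_nonneg (mul_nonneg (pow_nonneg M.disc_pos.le t) (stateDist_nonneg M π hπ t s)) (hπ.1 s a))
    (fun t => ?_) (summable_geometric_of_lt_one M.disc_pos.le M.disc_lt_one)
  have h1 : M.stateDist π t s ≤ 1 := stateDist_le_one M π hπ t s
  have h2 : π s a ≤ 1 := pi_le_one π hπ s a
  have h3 : 0 ≤ M.stateDist π t s := stateDist_nonneg M π hπ t s
  have h4 : (0:ℝ) ≤ M.disc ^ t := pow_nonneg M.disc_pos.le t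
  calc M.disc ^ t * M.stateDist π t s * π s a
      ≤ M.disc ^ t * M.stateDist π t s := mul_le_of_le_one_right (mul_nonneg h4 h3) h2
    _ ≤ M.disc ^ t := mul_le_of_le_one_right h4 h1

lemma occ_nonneg (M : FinMDP S A) (π : S → A → ℝ) (hπ : IsPolicy π) (s : S) (a : A) :
    0 ≤ M.occ π s a := by
  refine mul_nonneg (by linarith [M.disc_lt_one]) (tsum_nonneg fun t => ?_)
  exact mul_nonneg (mul_nonneg (pow_nonneg M.disc_pos.le t) (stateDist_nonneg M π hπ t s)) (hπ.1 s a)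

/-- Flow equation for the occupancy measure. -/
lemma occ_flow (M : FinMDP S A) (π : S → A → ℝ) (hπ : IsPolicy π) (s' : S) (a' : A) :
    M.occ π s' a' = (1 - M.disc) * M.init s' * π s' a'
      + M.disc * ∑ s, ∑ a, M.occ π s a * M.P s a s' * π s' a' := by
  have hsum : ∀ s a, Summable fun t : ℕ => M.disc ^ t * M.stateDist π t s * π s a :=
    occ_summable M π hπ
  have hshift : ∀ t : ℕ, M.disc ^ (t + 1) * M.stateDist π (t + 1) s' * π s' a'
      = ∑ s, ∑ a, M.disc * ((M.disc ^ t * M.stateDist π t s * π s a) * M.P s a s' * π s' a') := by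
    intro t
    show M.disc ^ (t + 1) * (∑ s, ∑ a, M.stateDist π t s * π s a * M.P s a s') * π s' a' = _
    simp only [Finset.mul_sum, Finset.sum_mul]
    refine Finset.sum_congr rfl fun s _ => Finset.sum_congr rfl fun a _ => ?_
    ring
  have hsum2 : ∀ s a, Summable fun t : ℕ =>
      M.disc * ((M.disc ^ t * M.stateDist π t s * π s a) * M.P s a s' * π s' a') :=
    fun s a => (((hsum s a).mul_right _).mul_right _).mul_left _
  have hrest : ∑' t : ℕ, M.disc ^ (t + 1) * M.stateDist π (t + 1) s' * π s' a'
      = ∑ s, ∑ a, M.disc * ((∑' t : ℕ, M.disc ^ t * M.stateDist π t s * π s a)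
          * M.P s a s' * π s' a') := by
    rw [tsum_congr hshift, Summable.tsum_finsetSum (fun s _ => summable_sum fun a _ => hsum2 s a)]
    refine Finset.sum_congr rfl fun s _ => ?_
    rw [Summable.tsum_finsetSum (fun a _ => hsum2 s a)]
    refine Finset.sum_congr rfl fun a _ => ?_
    rw [tsum_mul_left, tsum_mul_right, tsum_mul_right]
  unfold FinMDP.occ
  rw [Summable.tsum_eq_zero_add (hsum s' a'), hrest]
  have h0 : M.disc ^ 0 * M.stateDist π 0 s' * π s' a' = M.init s' * π s' a' := by
    simp [FinMDP.stateDist]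
  rw [h0, mul_add]
  congr 1
  · ring
  · simp only [Finset.mul_sum]
    refine Finset.sum_congr rfl fun s _ => Finset.sum_congr rfl fun a _ => ?_
    ring

/-- Jensen's inequality for a finite probability weight. -/
lemma weighted_sq_le {ι : Type*} [Fintype ι] (w x : ι → ℝ) (hw : ∀ i, 0 ≤ w i)
    (hw1 : ∑ i, w i = 1) : (∑ i, w i * x i) ^ 2 ≤ ∑ i, w i * x i ^ 2 := by
  have h := Finset.sum_mul_sq_le_sq_mul_sq Finset.univ (fun i => Real.sqrt (w i))
    (fun i => Real.sqrt (w i) * x i)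
  have e1 : ∀ i : ι, Real.sqrt (w i) * (Real.sqrt (w i) * x i) = w i * x i := by
    intro i; rw [← mul_assoc, Real.mul_self_sqrt (hw i)]
  have e2 : ∀ i : ι, Real.sqrt (w i) ^ 2 = w i := fun i => Real.sq_sqrt (hw i)
  have e3 : ∀ i : ι, (Real.sqrt (w i) * x i) ^ 2 = w i * x i ^ 2 := by
    intro i; rw [mul_pow, Real.sq_sqrt (hw i)]
  simp only [e1, e2, e3, hw1, one_mul] at h
  exact h

lemma sum_swap4 {ι κ ι' κ' : Type*} [Fintype ι] [Fintype κ] [Fintype ι'] [Fintype κ']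
    (F : ι → κ → ι' → κ' → ℝ) :
    ∑ i, ∑ j, ∑ i', ∑ j', F i j i' j' = ∑ i', ∑ j', ∑ i, ∑ j, F i j i' j' := by
  calc ∑ i, ∑ j, ∑ i', ∑ j', F i j i' j'
      = ∑ i, ∑ i', ∑ j, ∑ j', F i j i' j' :=
        Finset.sum_congr rfl fun i _ => Finset.sum_comm
    _ = ∑ i', ∑ i, ∑ j, ∑ j', F i j i' j' := Finset.sum_comm
    _ = ∑ i', ∑ i, ∑ j', ∑ j, F i j i' j' :=
        Finset.sum_congr rfl fun i' _ => Finset.sum_congr rfl fun i _ => Finset.sum_comm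
    _ = ∑ i', ∑ j', ∑ i, ∑ j, F i j i' j' :=
        Finset.sum_congr rfl fun i' _ => Finset.sum_comm

/-- Bellman backup contraction in L2 of the occupancy measure. -/
theorem stmt7 (M : FinMDP S A) (π Q f : S → A → ℝ) (hπ : IsPolicy π) (hQ : M.IsQ π Q) :
    ∑ s, ∑ a, M.occ π s a * (M.bellman π f s a - Q s a) ^ 2
      ≤ M.disc * ∑ s, ∑ a, M.occ π s a * (f s a - Q s a) ^ 2 := by
  set γ := M.disc with hγ
  have hγ0 := M.disc_pos
  have hγ1 := M.disc_lt_one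
  set g : S → A → ℝ := fun s a => f s a - Q s a with hg
  have hdiff : ∀ s a, M.bellman π f s a - Q s a
      = γ * ∑ s', M.P s a s' * ∑ a', π s' a' * g s' a' := by
    intro s a
    rw [hQ s a]
    show (M.r s a + γ * ∑ s', M.P s a s' * ∑ a', π s' a' * f s' a')
        - (M.r s a + γ * ∑ s', M.P s a s' * ∑ a', π s' a' * Q s' a') = _
    have hinner : ∀ s' : S, M.P s a s' * ∑ a', π s' a' * g s' a'
        = M.P s a s' * ∑ a', π s' a' * f s' a' - M.P s a s' * ∑ a', π s' a' * Q s' a' := by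
      intro s'
      rw [← mul_sub, ← Finset.sum_sub_distrib]
      congr 1
      refine Finset.sum_congr rfl fun a' _ => ?_
      simp only [hg]; ring
    rw [Finset.sum_congr rfl fun s' _ => hinner s', Finset.sum_sub_distrib]
    ring
  have hjensen : ∀ s a, (∑ s', M.P s a s' * ∑ a', π s' a' * g s' a') ^ 2
      ≤ ∑ s', M.P s a s' * ∑ a', π s' a' * g s' a' ^ 2 := by
    intro s a
    calc (∑ s', M.P s a s' * ∑ a', π s' a' * g s' a') ^ 2
        ≤ ∑ s', M.P s a s' * (∑ a', π s' a' * g s' a') ^ 2 :=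
          weighted_sq_le (M.P s a) _ (M.P_nonneg s a) (M.P_sum s a)
      _ ≤ ∑ s', M.P s a s' * ∑ a', π s' a' * g s' a' ^ 2 := by
          refine Finset.sum_le_sum fun s' _ => ?_
          exact mul_le_mul_of_nonneg_left
            (weighted_sq_le (π s') (g s') (hπ.1 s') (hπ.2 s')) (M.P_nonneg s a s')
  have hflow : ∀ s' a', γ * ∑ s, ∑ a, M.occ π s a * M.P s a s' * π s' a' ≤ M.occ π s' a' := by
    intro s' a'
    rw [occ_flow M π hπ s' a']
    have : 0 ≤ (1 - γ) * M.init s' * π s' a' :=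
      mul_nonneg (mul_nonneg (by linarith) (M.init_nonneg s')) (hπ.1 s' a')
    linarith
  calc ∑ s, ∑ a, M.occ π s a * (M.bellman π f s a - Q s a) ^ 2
      ≤ ∑ s, ∑ a, M.occ π s a * (γ ^ 2 * ∑ s', M.P s a s' * ∑ a', π s' a' * g s' a' ^ 2) := by
        refine Finset.sum_le_sum fun s _ => Finset.sum_le_sum fun a _ => ?_
        refine mul_le_mul_of_nonneg_left ?_ (occ_nonneg M π hπ s a)
        rw [hdiff s a, mul_pow]
        exact mul_le_mul_of_nonneg_left (hjensen s a) (by positivity)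
    _ = ∑ s, ∑ a, ∑ s', ∑ a', γ * γ * M.occ π s a * M.P s a s' * π s' a' * g s' a' ^ 2 := by
        refine Finset.sum_congr rfl fun s _ => Finset.sum_congr rfl fun a _ => ?_
        simp only [Finset.mul_sum]
        refine Finset.sum_congr rfl fun s' _ => Finset.sum_congr rfl fun a' _ => ?_
        ring
    _ = ∑ s', ∑ a', ∑ s, ∑ a, γ * γ * M.occ π s a * M.P s a s' * π s' a' * g s' a' ^ 2 :=
        sum_swap4 _
    _ = γ * ∑ s', ∑ a', (γ * ∑ s, ∑ a, M.occ π s a * M.P s a s' * π s' a') * g s' a' ^ 2 := by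
        rw [Finset.mul_sum]
        refine Finset.sum_congr rfl fun s' _ => ?_
        rw [Finset.mul_sum]
        refine Finset.sum_congr rfl fun a' _ => ?_
        simp only [Finset.mul_sum, Finset.sum_mul]
        refine Finset.sum_congr rfl fun s _ => Finset.sum_congr rfl fun a _ => ?_
        ring
    _ ≤ γ * ∑ s', ∑ a', M.occ π s' a' * g s' a' ^ 2 := by
        refine mul_le_mul_of_nonneg_left ?_ hγ0.le
        refine Finset.sum_le_sum fun s' _ => Finset.sum_le_sum fun a' _ => ?_
        exact mul_le_mul_of_nonneg_right (hflow s' a') (sq_nonneg _)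
end
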